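/- The scale mixture of a centered g-dimensional normal distribution with covariance σ²τ² I_g, mixed over τ² with a Gamma((g+1)/2, λ²/2) density, yields a g-dimensional Multi-Laplace marginal density: for all θ ∈ ℝ^g, ∫₀^∞ (2πσ²τ²)^{-g/2} exp(-‖θ‖₂²/(2σ²τ²)) · (λ²/2)^{(g+1)/2} (τ²)^{(g-1)/2} / Γ((g+1)/2) · exp(-λ²τ²/2) dτ² = C_g · σ^{-g} λ^g exp(-λ‖θ‖₂/σ), where C_g = π^{(1-g)/2} 2^{-g} / Γ((g+1)/2). -/

import Mathlib

open MeasureTheory Real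

namespace ScaleMixtureAux
open Set

lemma phi_image (c d : ℝ) (hc : 0 < c) (hd : 0 < d) :
    (fun u : ℝ => d * u - c / u) '' Set.Ioi 0 = Set.univ := by
  ext y
  simp only [Set.mem_image, Set.mem_univ, iff_true]
  set s := Real.sqrt (y ^ 2 + 4 * c * d) with hs
  have hs2 : s ^ 2 = y ^ 2 + 4 * c * d := Real.sq_sqrt (by positivity)
  have hsy : -y < s := by
    nlinarith [Real.sqrt_nonneg (y ^ 2 + 4 * c * d), hs2]
  have hys : (0:ℝ) < y + s := by linarith
  have hx : 0 < (y + s) / (2 * d) := div_pos hys (by linarith)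
  refine ⟨(y + s) / (2 * d), hx, ?_⟩
  have hd' : (2:ℝ) * d ≠ 0 := by positivity
  field_simp
  nlinarith [hs2]

lemma phi_deriv (c d : ℝ) (x : ℝ) (hx : x ∈ Set.Ioi (0:ℝ)) :
    HasDerivWithinAt (fun u : ℝ => d * u - c / u) (d + c / x ^ 2) (Set.Ioi 0) x := by
  have hx0 : x ≠ 0 := ne_of_gt hx
  have h1 : HasDerivAt (fun u : ℝ => d * u - c / u) (d + c / x ^ 2) x := by
    have h0 := ((hasDerivAt_id x).const_mul d).sub ((hasDerivAt_inv hx0).const_mul c)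
    simp only [div_eq_mul_inv]
    convert h0 using 1
    · rfl
    · rfl
    · rfl
    · ring
  exact h1.hasDerivWithinAt

lemma phi_inj (c d : ℝ) (hc : 0 < c) (hd : 0 < d) :
    Set.InjOn (fun u : ℝ => d * u - c / u) (Set.Ioi 0) := by
  have : StrictMonoOn (fun u : ℝ => d * u - c / u) (Set.Ioi 0) := by
    intro x hx y hy hxy
    have hx' : (0:ℝ) < x := hx
    have hy' : (0:ℝ) < y := hy
    have h1 : d * x < d * y := by nlinarith
    have h2 : c / y < c / x := div_lt_div_of_pos_left hc hx' hxy
    simp only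
    linarith
  exact this.injOn

lemma exp_phi_integrable (c d : ℝ) (hc : 0 < c) (hd : 0 < d) :
    IntegrableOn (fun u : ℝ => Real.exp (-(d * u - c / u) ^ 2)) (Set.Ioi 0) := by
  have hmeas : AEStronglyMeasurable (fun u : ℝ => Real.exp (-(d * u - c / u) ^ 2))
      (volume.restrict (Set.Ioi 0)) := by
    apply Measurable.aestronglyMeasurable
    exact (((measurable_const.mul measurable_id).sub
      (measurable_const.div measurable_id)).pow measurable_const).neg.exp
  have hint : IntegrableOn (fun u : ℝ => Real.exp (2 * c * d) * Real.exp (-(d ^ 2) * u ^ 2))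
      (Set.Ioi 0) := by
    exact ((integrable_exp_neg_mul_sq (by positivity : (0:ℝ) < d ^ 2)).const_mul _).integrableOn
  refine hint.mono' hmeas ?_
  filter_upwards [ae_restrict_mem measurableSet_Ioi] with u hu
  have hu0 : (0:ℝ) < u := hu
  rw [norm_of_nonneg (Real.exp_nonneg _), ← Real.exp_add]
  apply Real.exp_le_exp.2
  have h : (d * u - c / u) ^ 2 = d ^ 2 * u ^ 2 - 2 * c * d + c ^ 2 / u ^ 2 := by
    field_simp; ring
  nlinarith [sq_nonneg (c / u), div_nonneg (sq_nonneg c) (sq_nonneg u)]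


lemma psi_deriv (c d : ℝ) (x : ℝ) (hx : x ∈ Set.Ioi (0:ℝ)) :
    HasDerivWithinAt (fun v : ℝ => c / (d * v)) (-(c / d) / x ^ 2) (Set.Ioi 0) x := by
  have hx0 : x ≠ 0 := ne_of_gt hx
  have h0 : HasDerivAt (fun v : ℝ => c / d * v⁻¹) (c / d * (-(x ^ 2)⁻¹)) x :=
    (hasDerivAt_inv hx0).const_mul _
  have h1 : HasDerivAt (fun v : ℝ => c / (d * v)) (-(c / d) / x ^ 2) x := by
    have hfun : (fun v : ℝ => c / (d * v)) = fun v : ℝ => c / d * v⁻¹ := by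
      funext v; rw [← div_div, div_eq_mul_inv]
    rw [hfun, show -(c / d) / x ^ 2 = c / d * (-(x ^ 2)⁻¹) by ring]
    exact h0
  exact h1.hasDerivWithinAt

lemma psi_image (c d : ℝ) (hc : 0 < c) (hd : 0 < d) :
    (fun v : ℝ => c / (d * v)) '' Set.Ioi 0 = Set.Ioi 0 := by
  ext y
  simp only [Set.mem_image, Set.mem_Ioi]
  constructor
  · rintro ⟨x, hx, rfl⟩; positivity
  · intro hy
    refine ⟨c / (d * y), by positivity, ?_⟩
    field_simp

lemma psi_inj (c d : ℝ) (hc : 0 < c) (hd : 0 < d) :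
    Set.InjOn (fun v : ℝ => c / (d * v)) (Set.Ioi 0) := by
  intro x hx y hy hxy
  have hx0 : (0:ℝ) < x := hx
  have hy0 : (0:ℝ) < y := hy
  field_simp at hxy
  exact hxy.symm

lemma glasser (c d : ℝ) (hc : 0 < c) (hd : 0 < d) :
    ∫ u in Set.Ioi (0:ℝ), Real.exp (-(d * u - c / u) ^ 2) = Real.sqrt π / (2 * d) := by
  have h1 := integral_image_eq_integral_abs_deriv_smul measurableSet_Ioi
    (phi_deriv c d) (phi_inj c d hc hd) (fun x => Real.exp (-x ^ 2))
  rw [phi_image c d hc hd, MeasureTheory.setIntegral_univ] at h1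
  have hgauss : (∫ x : ℝ, Real.exp (-x ^ 2)) = Real.sqrt π := by
    simpa using integral_gaussian 1
  rw [hgauss] at h1
  -- h1 : √π = ∫ x in Ioi 0, |d + c / x ^ 2| • exp (-(d * x - c / x) ^ 2)
  have habs : ∀ x ∈ Set.Ioi (0:ℝ),
      |d + c / x ^ 2| • Real.exp (-(d * x - c / x) ^ 2)
        = d * Real.exp (-(d * x - c / x) ^ 2) + (c / x ^ 2) * Real.exp (-(d * x - c / x) ^ 2) := by
    intro x hx
    have hx0 : (0:ℝ) < x := hx
    rw [smul_eq_mul, abs_of_pos (by positivity), add_mul]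
  rw [setIntegral_congr_fun measurableSet_Ioi habs] at h1
  -- integrability
  have hId : IntegrableOn (fun x : ℝ => d * Real.exp (-(d * x - c / x) ^ 2)) (Set.Ioi 0) :=
    (exp_phi_integrable c d hc hd).const_mul d
  have hItot : IntegrableOn
      (fun x : ℝ => d * Real.exp (-(d * x - c / x) ^ 2)
        + (c / x ^ 2) * Real.exp (-(d * x - c / x) ^ 2)) (Set.Ioi 0) := by
    have := (integrableOn_image_iff_integrableOn_abs_deriv_smul measurableSet_Ioi
      (phi_deriv c d) (phi_inj c d hc hd) (fun x => Real.exp (-x ^ 2))).1 ?_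
    · exact this.congr_fun habs measurableSet_Ioi
    · rw [phi_image c d hc hd]
      rw [integrableOn_univ]
      simpa using integrable_exp_neg_mul_sq (one_pos)
  have hIc : IntegrableOn (fun x : ℝ => (c / x ^ 2) * Real.exp (-(d * x - c / x) ^ 2))
      (Set.Ioi 0) := by
    have h3 : IntegrableOn
        ((fun x : ℝ => d * Real.exp (-(d * x - c / x) ^ 2)
          + (c / x ^ 2) * Real.exp (-(d * x - c / x) ^ 2))
         - (fun x : ℝ => d * Real.exp (-(d * x - c / x) ^ 2))) (Set.Ioi 0) volume :=
      hItot.sub hId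
    exact h3.congr_fun (fun x _ => by simp [Pi.sub_apply]) measurableSet_Ioi
  rw [MeasureTheory.integral_add hId hIc] at h1
  -- second substitution
  have h2 := integral_image_eq_integral_abs_deriv_smul measurableSet_Ioi
    (psi_deriv c d) (psi_inj c d hc hd)
    (fun u => (c / u ^ 2) * Real.exp (-(d * u - c / u) ^ 2))
  rw [psi_image c d hc hd] at h2
  have heq : ∀ v ∈ Set.Ioi (0:ℝ),
      |(-(c / d) / v ^ 2)| • ((c / (c / (d * v)) ^ 2) *
        Real.exp (-(d * (c / (d * v)) - c / (c / (d * v))) ^ 2))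
      = d * Real.exp (-(d * v - c / v) ^ 2) := by
    intro v hv
    have hv0 : (0:ℝ) < v := hv
    have e1 : c / (c / (d * v)) = d * v := by field_simp
    have e2 : d * (c / (d * v)) = c / v := by field_simp
    rw [smul_eq_mul, e1, e2, neg_div, abs_neg, abs_of_pos (by positivity : (0:ℝ) < (c / d) / v ^ 2)]
    have e3 : -(c / v - d * v) ^ 2 = -(d * v - c / v) ^ 2 := by ring
    rw [e3]
    have e4 : c / (d * v) ^ 2 = c / (d ^ 2 * v ^ 2) := by ring_nf
    field_simp
  rw [setIntegral_congr_fun measurableSet_Ioi heq] at h2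
  -- h2 : ∫ c/u² e = ∫ d e
  rw [h2] at h1
  rw [MeasureTheory.integral_const_mul] at h1
  have hd2 : (2:ℝ) * d ≠ 0 := by positivity
  field_simp at h1 ⊢
  linarith [h1]

lemma key_integral (a b : ℝ) (ha : 0 ≤ a) (hb : 0 < b) :
    ∫ t in Set.Ioi (0:ℝ), t ^ (-(1:ℝ)/2) * Real.exp (-a / t - b * t)
      = Real.sqrt (π / b) * Real.exp (-2 * Real.sqrt (a * b)) := by
  have hsq_deriv : ∀ x ∈ Set.Ioi (0:ℝ), HasDerivWithinAt (fun u : ℝ => u ^ 2) (2 * x) (Set.Ioi 0) x := by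
    intro x hx
    simpa using (hasDerivAt_pow 2 x).hasDerivWithinAt
  have hsq_inj : Set.InjOn (fun u : ℝ => u ^ 2) (Set.Ioi 0) := by
    intro x hx y hy h
    have := congrArg Real.sqrt h
    rwa [Real.sqrt_sq (le_of_lt hx), Real.sqrt_sq (le_of_lt hy)] at this
  have himg : (fun u : ℝ => u ^ 2) '' Set.Ioi 0 = Set.Ioi 0 := by
    ext y
    simp only [Set.mem_image, Set.mem_Ioi]
    constructor
    · rintro ⟨x, hx, rfl⟩; positivity
    · intro hy; exact ⟨Real.sqrt y, Real.sqrt_pos.2 hy, Real.sq_sqrt hy.le⟩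
  have h := integral_image_eq_integral_abs_deriv_smul measurableSet_Ioi hsq_deriv hsq_inj
    (fun t => t ^ (-(1:ℝ)/2) * Real.exp (-a / t - b * t))
  rw [himg] at h
  rw [h]
  have hpt : ∀ u ∈ Set.Ioi (0:ℝ),
      |2 * u| • (((u:ℝ) ^ 2) ^ (-(1:ℝ)/2) * Real.exp (-a / u ^ 2 - b * u ^ 2))
        = 2 * Real.exp (-a / u ^ 2 - b * u ^ 2) := by
    intro u hu
    have hu0 : (0:ℝ) < u := hu
    have hpow : ((u:ℝ) ^ 2) ^ (-(1:ℝ)/2) = u⁻¹ := by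
      rw [← Real.rpow_natCast u 2, ← Real.rpow_mul hu0.le]
      norm_num
      exact Real.rpow_neg_one u
    rw [smul_eq_mul, hpow, abs_of_pos (by positivity : (0:ℝ) < 2 * u)]
    field_simp
  rw [setIntegral_congr_fun measurableSet_Ioi hpt]
  rcases eq_or_lt_of_le ha with rfl | ha'
  · have huniv : ∀ u : ℝ, (2:ℝ) * Real.exp (-0 / u ^ 2 - b * u ^ 2) = 2 * Real.exp (-b * u ^ 2) := by
      intro u; norm_num
    simp_rw [huniv]
    rw [MeasureTheory.integral_const_mul, integral_gaussian_Ioi]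
    simp
    ring
  · set c := Real.sqrt a with hc
    set d := Real.sqrt b with hd
    have hc0 : 0 < c := Real.sqrt_pos.2 ha'
    have hd0 : 0 < d := Real.sqrt_pos.2 hb
    have hc2 : c ^ 2 = a := Real.sq_sqrt ha
    have hd2 : d ^ 2 = b := Real.sq_sqrt hb.le
    have hpt2 : ∀ u ∈ Set.Ioi (0:ℝ),
        2 * Real.exp (-a / u ^ 2 - b * u ^ 2)
          = (2 * Real.exp (-(2 * (c * d)))) * Real.exp (-(d * u - c / u) ^ 2) := by
      intro u hu
      have hu0 : (0:ℝ) < u := hu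
      rw [mul_assoc, ← Real.exp_add]
      congr 1
      have : (d * u - c / u) ^ 2 = d ^ 2 * u ^ 2 - 2 * (c * d) + c ^ 2 / u ^ 2 := by
        field_simp
        ring
      rw [this, hc2, hd2]
      ring
    rw [setIntegral_congr_fun measurableSet_Ioi hpt2, MeasureTheory.integral_const_mul,
      glasser c d hc0 hd0]
    rw [Real.sqrt_div pi_pos.le, Real.sqrt_mul ha, ← hc, ← hd]
    rw [show (-2 : ℝ) * (c * d) = -(2 * (c * d)) by ring]
    field_simp
lemma const_eq (g : ℕ) (σ lam : ℝ) (hσ : 0 < σ) (hlam : 0 < lam) :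
    (2 * π * σ ^ 2) ^ (-(g : ℝ) / 2) * (lam ^ 2 / 2) ^ (((g : ℝ) + 1) / 2)
        * Real.sqrt (π / (lam ^ 2 / 2))
      = π ^ ((1 - (g : ℝ)) / 2) * (2 : ℝ) ^ (-(g : ℝ)) * σ ^ (-(g : ℝ)) * lam ^ g := by
  have hπ := Real.pi_pos
  have hA : (0:ℝ) < 2 * π * σ ^ 2 := by positivity
  have hB : (0:ℝ) < lam ^ 2 / 2 := by positivity
  have hC : (0:ℝ) < π / (lam ^ 2 / 2) := by positivity
  rw [Real.rpow_def_of_pos hA, Real.rpow_def_of_pos hB, Real.sqrt_eq_rpow,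
      Real.rpow_def_of_pos hC, Real.rpow_def_of_pos hπ, Real.rpow_def_of_pos two_pos,
      Real.rpow_def_of_pos hσ, ← Real.rpow_natCast lam g, Real.rpow_def_of_pos hlam,
      ← Real.exp_add, ← Real.exp_add, ← Real.exp_add, ← Real.exp_add, ← Real.exp_add]
  congr 1
  rw [Real.log_mul (by positivity) (by positivity), Real.log_mul (by norm_num) (ne_of_gt hπ),
      Real.log_pow, Real.log_div (by positivity) (by norm_num), Real.log_pow,
      Real.log_div (ne_of_gt hπ) (ne_of_gt hB),
      Real.log_div (by positivity) (by norm_num), Real.log_pow]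
  push_cast
  ring

end ScaleMixtureAux

open ScaleMixtureAux

/-- The scale mixture of a centered `g`-dimensional normal with covariance `σ²τ² I`,
mixed over `τ²` with a `Gamma((g+1)/2, λ²/2)` density, is a Multi-Laplace density. -/
theorem scale_mixture_multi_laplace
    (g : ℕ) (hg : 1 ≤ g) (σ lam : ℝ) (hσ : 0 < σ) (hlam : 0 < lam)
    (θ : EuclideanSpace ℝ (Fin g)) :
    ∫ t in Set.Ioi (0 : ℝ),
        (2 * π * σ ^ 2 * t) ^ (-(g : ℝ) / 2) * Real.exp (-‖θ‖ ^ 2 / (2 * σ ^ 2 * t)) *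
          ((lam ^ 2 / 2) ^ (((g : ℝ) + 1) / 2) * t ^ (((g : ℝ) - 1) / 2) /
            Real.Gamma (((g : ℝ) + 1) / 2)) * Real.exp (-(lam ^ 2) * t / 2)
      = (π ^ ((1 - (g : ℝ)) / 2) * (2 : ℝ) ^ (-(g : ℝ)) / Real.Gamma (((g : ℝ) + 1) / 2)) *
          σ ^ (-(g : ℝ)) * lam ^ (g : ℕ) * Real.exp (-lam * ‖θ‖ / σ) := by
  set a : ℝ := ‖θ‖ ^ 2 / (2 * σ ^ 2) with ha_def
  set b : ℝ := lam ^ 2 / 2 with hb_def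
  have ha : 0 ≤ a := by positivity
  have hb : 0 < b := by positivity
  set K : ℝ := (2 * π * σ ^ 2) ^ (-(g : ℝ) / 2) *
      ((lam ^ 2 / 2) ^ (((g : ℝ) + 1) / 2) / Real.Gamma (((g : ℝ) + 1) / 2)) with hK_def
  have hpt : ∀ t ∈ Set.Ioi (0:ℝ),
      (2 * π * σ ^ 2 * t) ^ (-(g : ℝ) / 2) * Real.exp (-‖θ‖ ^ 2 / (2 * σ ^ 2 * t)) *
          ((lam ^ 2 / 2) ^ (((g : ℝ) + 1) / 2) * t ^ (((g : ℝ) - 1) / 2) /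
            Real.Gamma (((g : ℝ) + 1) / 2)) * Real.exp (-(lam ^ 2) * t / 2)
        = K * (t ^ (-(1:ℝ)/2) * Real.exp (-a / t - b * t)) := by
    intro t ht
    have ht0 : (0:ℝ) < t := ht
    have hT : t ^ (-(g : ℝ) / 2) * t ^ (((g : ℝ) - 1) / 2) = t ^ (-(1:ℝ)/2) := by
      rw [← Real.rpow_add ht0, show -(g : ℝ) / 2 + ((g : ℝ) - 1) / 2 = -(1:ℝ)/2 by ring]
    have hE : Real.exp (-‖θ‖ ^ 2 / (2 * σ ^ 2 * t)) * Real.exp (-(lam ^ 2) * t / 2)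
        = Real.exp (-a / t - b * t) := by
      rw [← Real.exp_add]
      congr 1
      rw [ha_def, hb_def]
      field_simp
      ring
    rw [Real.mul_rpow (by positivity : (0:ℝ) ≤ 2 * π * σ ^ 2) ht0.le]
    rw [hK_def, ← hT, ← hE]
    ring
  rw [MeasureTheory.setIntegral_congr_fun measurableSet_Ioi hpt,
    MeasureTheory.integral_const_mul, key_integral a b ha hb]
  have hsq : Real.sqrt (a * b) = lam * ‖θ‖ / (2 * σ) := by
    rw [show a * b = (lam * ‖θ‖ / (2 * σ)) ^ 2 by rw [ha_def, hb_def]; field_simp]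
    exact Real.sqrt_sq (by positivity)
  rw [hsq, show (-2 : ℝ) * (lam * ‖θ‖ / (2 * σ)) = -lam * ‖θ‖ / σ by field_simp]
  have hconst := const_eq g σ lam hσ hlam
  have hmain : K * Real.sqrt (π / b)
      = π ^ ((1 - (g : ℝ)) / 2) * (2 : ℝ) ^ (-(g : ℝ)) / Real.Gamma (((g : ℝ) + 1) / 2) *
          σ ^ (-(g : ℝ)) * lam ^ g := by
    calc K * Real.sqrt (π / b)
        = ((2 * π * σ ^ 2) ^ (-(g : ℝ) / 2) * (lam ^ 2 / 2) ^ (((g : ℝ) + 1) / 2)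
            * Real.sqrt (π / (lam ^ 2 / 2))) / Real.Gamma (((g : ℝ) + 1) / 2) := by
          rw [hK_def, hb_def]; ring
      _ = (π ^ ((1 - (g : ℝ)) / 2) * (2 : ℝ) ^ (-(g : ℝ)) * σ ^ (-(g : ℝ)) * lam ^ g)
            / Real.Gamma (((g : ℝ) + 1) / 2) := by rw [hconst]
      _ = _ := by ring
  linear_combination Real.exp (-lam * ‖θ‖ / σ) * hmain
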